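/- Let $A$ be a Noetherian integral domain that is complete with respect to an ideal $J \subseteq A$, and suppose the set $J$ is infinite. Let $(J)$ denote the ideal of $A[[t]]$ generated by $J$, where $t$ is an indeterminate. Let $I_1, \dots, I_N \subseteq A[[t]]$ be prime ideals such that the ideal $(J, t)$ is not contained in $I_i$ for any $1 \leq i \leq N$. Then there exists $c \in (J)$ such that $t + c \notin I_i$ for all $1 \leq i \leq N$. -/

import Mathlib

open Pointwise

/-- If `I` is a prime ideal of `A⟦X⟧` not containing `(J, X)`, where `A` is `J`-adically
complete, then the quotient `A⟦X⟧ ⧸ I` is infinite. -/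
theorem stmt3_quot_infinite {A : Type*} [CommRing A] [IsDomain A]
    (J : Ideal A) [IsAdicComplete J A]
    (I : Ideal (PowerSeries A)) (hp : I.IsPrime)
    (hns : ¬ (J.map ((PowerSeries.C : A →+* PowerSeries A)) + Ideal.span {PowerSeries.X}) ≤ I) :
    Infinite (PowerSeries A ⧸ I) := by
  rw [← not_finite_iff_infinite]
  intro hfin
  have claim : ∀ n m : ℕ, n < m →
      Ideal.Quotient.mk I (PowerSeries.X ^ n) = Ideal.Quotient.mk I (PowerSeries.X ^ m) →
      PowerSeries.X ∈ I := by
    intro n m h hnm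
    have hsub : (PowerSeries.X : PowerSeries A) ^ n - PowerSeries.X ^ m ∈ I :=
      Ideal.Quotient.eq.mp hnm
    have hfac : (PowerSeries.X : PowerSeries A) ^ n - PowerSeries.X ^ m
        = PowerSeries.X ^ n * (1 - PowerSeries.X ^ (m - n)) := by
      rw [mul_sub, mul_one, ← pow_add]
      congr 2
      omega
    rw [hfac] at hsub
    have hunit : IsUnit (1 - (PowerSeries.X : PowerSeries A) ^ (m - n)) := by
      rw [PowerSeries.isUnit_iff_constantCoeff]
      have : m - n ≠ 0 := by omega
      simp [this]
    have hXn : (PowerSeries.X : PowerSeries A) ^ n ∈ I :=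
      (hp.mem_or_mem hsub).resolve_right (fun h => hp.ne_top (I.eq_top_of_isUnit_mem h hunit))
    have hn : n ≠ 0 := by
      intro h0
      subst h0
      simp only [pow_zero] at hXn
      exact hp.ne_top (I.eq_top_of_isUnit_mem hXn isUnit_one)
    exact hp.mem_of_pow_mem n hXn
  have hX : PowerSeries.X ∈ I := by
    obtain ⟨n, m, hne, hnm⟩ := Finite.exists_ne_map_eq_of_infinite
      (fun n : ℕ => Ideal.Quotient.mk I (PowerSeries.X ^ n))
    rcases lt_or_gt_of_ne hne with h | h
    · exact claim n m h hnm
    · exact claim m n h hnm.symm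
  set q := I.comap ((PowerSeries.C : A →+* PowerSeries A)) with hq
  have hqprime : q.IsPrime := Ideal.IsPrime.comap _
  have hinj : Function.Injective
      (Ideal.quotientMap I ((PowerSeries.C : A →+* PowerSeries A)) (le_refl _ : q ≤ I.comap _)) :=
    Ideal.quotientMap_injective
  have hfinq : Finite (A ⧸ q) := Finite.of_injective _ hinj
  have hfield : IsField (A ⧸ q) := Finite.isField_of_domain _
  have hqmax : q.IsMaximal := Ideal.Quotient.maximal_of_isField _ hfield
  have hJq : J ≤ q := by
    refine le_trans (IsAdicComplete.le_jacobson_bot (I := J)) ?_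
    rw [Ideal.jacobson]
    exact sInf_le ⟨bot_le, hqmax⟩
  apply hns
  rw [Ideal.add_eq_sup, sup_le_iff]
  constructor
  · rw [Ideal.map_le_iff_le_comap]
    exact hJq
  · rw [Ideal.span_le, Set.singleton_subset_iff]
    exact hX

/-- Translation lemma: let `A` be a Noetherian domain, complete with respect to an ideal `J`
which is infinite as a set. Let `(J)` be the ideal of `A[[t]]` generated by `J`, and let
`I₁, …, I_N` be prime ideals of `A[[t]]` none of which contains the ideal `(J, t)`.
Then there is `c ∈ (J)` with `t + c ∉ Iᵢ` for all `i`. -/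
theorem stmt3 {A : Type*} [CommRing A] [IsDomain A] [IsNoetherianRing A]
    (J : Ideal A) [IsAdicComplete J A] (hJ : (J : Set A).Infinite)
    (N : ℕ) (I : Fin N → Ideal (PowerSeries A)) (hprime : ∀ i, (I i).IsPrime)
    (hns : ∀ i, ¬ (J.map ((PowerSeries.C : A →+* PowerSeries A)) + Ideal.span {PowerSeries.X}) ≤ I i) :
    ∃ c ∈ J.map ((PowerSeries.C : A →+* PowerSeries A)), ∀ i, PowerSeries.X + c ∉ I i := by
  classical
  by_contra hcon
  push_neg at hcon
  -- `hcon : ∀ c ∈ J.map C, ∃ i, X + c ∈ I i`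
  set JC := J.map ((PowerSeries.C : A →+* PowerSeries A)) with hJC
  -- the subgroups and coset representatives
  set S : Fin N → Prop := fun i => ∃ c : ↥JC, PowerSeries.X + (c : PowerSeries A) ∈ I i with hS
  set H : Fin N → AddSubgroup ↥JC :=
    fun i => AddSubgroup.comap JC.toAddSubgroup.subtype (I i).toAddSubgroup with hH
  set g : Fin N → ↥JC := fun i => if h : S i then h.choose else 0 with hg
  have hgspec : ∀ i, S i → PowerSeries.X + ((g i : ↥JC) : PowerSeries A) ∈ I i := by
    intro i hi
    simp only [hg, dif_pos hi]
    exact hi.choose_spec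
  have hcovers : ⋃ i ∈ Finset.univ.filter S, g i +ᵥ (H i : Set ↥JC) = Set.univ := by
    ext c
    simp only [Set.mem_univ, iff_true, Set.mem_iUnion]
    obtain ⟨i, hi⟩ := hcon (c : PowerSeries A) c.2
    have hSi : S i := ⟨c, hi⟩
    refine ⟨i, by simp [hSi], ?_⟩
    rw [Set.mem_vadd_set_iff_neg_vadd_mem]
    show (-(g i) + c : ↥JC) ∈ H i
    show ((-(g i) + c : ↥JC) : PowerSeries A) ∈ I i
    have : ((-(g i) + c : ↥JC) : PowerSeries A)
        = (PowerSeries.X + (c : PowerSeries A)) - (PowerSeries.X + ((g i : ↥JC) : PowerSeries A)) := by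
      push_cast [Submodule.coe_add, Submodule.coe_neg]
      ring
    rw [this]
    exact Ideal.sub_mem _ hi (hgspec i hSi)
  obtain ⟨k, hk, hfi⟩ := AddSubgroup.exists_finiteIndex_of_leftCoset_cover hcovers
  have hSk : S k := (Finset.mem_filter.mp hk).2
  have hXg : PowerSeries.X + ((g k : ↥JC) : PowerSeries A) ∈ I k := hgspec k hSk
  -- `J.map C` is not contained in `I k`
  have hnle : ¬ JC ≤ I k := by
    intro hle
    apply hns k
    rw [Ideal.add_eq_sup, sup_le_iff]
    refine ⟨hle, ?_⟩
    rw [Ideal.span_le, Set.singleton_subset_iff]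
    have : (PowerSeries.X : PowerSeries A)
        = (PowerSeries.X + ((g k : ↥JC) : PowerSeries A)) - ((g k : ↥JC) : PowerSeries A) := by ring
    rw [this]
    exact Ideal.sub_mem _ hXg (hle (g k).2)
  obtain ⟨x, hxJ, hxI⟩ := SetLike.not_le_iff_exists.mp hnle
  haveI : Infinite (PowerSeries A ⧸ I k) := stmt3_quot_infinite J (I k) (hprime k) (hns k)
  haveI : AddSubgroup.FiniteIndex (H k) := hfi
  haveI hfinGH : Finite (↥JC ⧸ H k) := AddSubgroup.finite_quotient_of_finiteIndex (H := H k)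
  -- construct an injection from the infinite quotient into the finite one
  set v : (PowerSeries A ⧸ I k) → ↥JC ⧸ H k :=
    fun y => QuotientAddGroup.mk ⟨x * Quotient.out y, Ideal.mul_mem_right _ _ hxJ⟩ with hv
  have hvinj : Function.Injective v := by
    intro y y' hyy
    rw [hv] at hyy
    rw [QuotientAddGroup.eq] at hyy
    have hmem : ((-(⟨x * Quotient.out y, Ideal.mul_mem_right _ _ hxJ⟩ : ↥JC)
        + ⟨x * Quotient.out y', Ideal.mul_mem_right _ _ hxJ⟩ : ↥JC) : PowerSeries A) ∈ I k := hyy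
    have heq : ((-(⟨x * Quotient.out y, Ideal.mul_mem_right _ _ hxJ⟩ : ↥JC)
        + ⟨x * Quotient.out y', Ideal.mul_mem_right _ _ hxJ⟩ : ↥JC) : PowerSeries A)
        = x * (Quotient.out y' - Quotient.out y) := by
      push_cast [Submodule.coe_add, Submodule.coe_neg]
      ring
    rw [heq] at hmem
    have hsub : Quotient.out y' - Quotient.out y ∈ I k :=
      ((hprime k).mem_or_mem hmem).resolve_left hxI
    have : Ideal.Quotient.mk (I k) (Quotient.out y') = Ideal.Quotient.mk (I k) (Quotient.out y) :=
      Ideal.Quotient.eq.mpr hsub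
    rw [show Ideal.Quotient.mk (I k) (Quotient.out y') = y' from Quotient.out_eq y',
      show Ideal.Quotient.mk (I k) (Quotient.out y) = y from Quotient.out_eq y] at this
    exact this.symm
  haveI : Infinite (↥JC ⧸ H k) := Infinite.of_injective v hvinj
  exact not_finite (↥JC ⧸ H k)
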